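/- Converse Farkas separation for bounded polygons: if P and Q are compact convex polyhedra in ℝ² defined by finitely many linear inequalities and their interiors are disjoint, then there exist nonnegative multipliers on the combined inequality system, summing to 1, whose aggregated inequality is infeasible (aggregated normal vector is zero while the aggregated right-hand side is ≥ 0). -/

import Mathlib

open RealInnerProductSpace

section Cone

variable {F : Type*} [NormedAddCommGroup F] [NormedSpace ℝ F] [FiniteDimensional ℝ F]
variable {ι : Type*} [Fintype ι]

/-- Conic Carathéodory: any conic combination can be rewritten with linearly
independent support. -/
lemma conic_caratheodory (g : ι → F) :
    ∀ (N : ℕ) (lam : ι → ℝ), (Finset.univ.filter fun i => lam i ≠ 0).card ≤ N →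
      (∀ i, 0 ≤ lam i) →
      ∃ mu : ι → ℝ, (∀ i, 0 ≤ mu i) ∧ (∑ i, mu i • g i = ∑ i, lam i • g i) ∧
        LinearIndependent ℝ (fun i : {i // mu i ≠ 0} => g (i : ι)) := by
  classical
  intro N
  induction N with
  | zero =>
      intro lam hcard _h0
      refine ⟨lam, _h0, rfl, ?_⟩
      have hz : ∀ i, lam i = 0 := by
        intro i
        by_contra hne
        have : i ∈ Finset.univ.filter fun i => lam i ≠ 0 := by
          simp [hne]
        have := Finset.card_pos.mpr ⟨i, this⟩
        omega
      haveI : IsEmpty {i // lam i ≠ 0} := ⟨fun j => j.2 (hz j.1)⟩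
      exact linearIndependent_empty_type
  | succ N ih =>
      intro lam hcard h0
      by_cases hli : LinearIndependent ℝ (fun i : {i // lam i ≠ 0} => g (i : ι))
      · exact ⟨lam, h0, rfl, hli⟩
      · obtain ⟨f, hfsum, i₀, hfi₀⟩ := Fintype.not_linearIndependent_iff.mp hli
        -- arrange for a positive entry
        obtain ⟨f, hfsum, i₀, hfi₀⟩ :
            ∃ f : {i // lam i ≠ 0} → ℝ, (∑ i, f i • g (i : ι)) = 0 ∧ ∃ i, 0 < f i := by
          rcases lt_or_gt_of_ne hfi₀ with h | h
          · refine ⟨-f, ?_, i₀, by simpa using h⟩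
            simp only [Pi.neg_apply, neg_smul, Finset.sum_neg_distrib, hfsum, neg_zero]
          · exact ⟨f, hfsum, i₀, h⟩
        set nu : ι → ℝ := fun i => if h : lam i ≠ 0 then f ⟨i, h⟩ else 0 with hnu
        have hnusupp : ∀ i, nu i ≠ 0 → lam i ≠ 0 := by
          intro i hi
          by_contra h
          exact hi (by simp [hnu, h])
        have hnusum : ∑ i, nu i • g i = 0 := by
          have h1 : ∑ i ∈ Finset.univ.filter (fun i => lam i ≠ 0), nu i • g i
              = ∑ i, nu i • g i := by
            refine Finset.sum_filter_of_ne ?_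
            intro i _ hne
            by_contra h
            exact hne (by simp [hnu, h])
          have h2 : ∑ i ∈ Finset.univ.filter (fun i => lam i ≠ 0), nu i • g i
              = ∑ i : {i // lam i ≠ 0}, nu (i : ι) • g (i : ι) := by
            refine Finset.sum_subtype _ (fun x => by simp) _
          have h3 : ∑ i : {i // lam i ≠ 0}, nu (i : ι) • g (i : ι)
              = ∑ i : {i // lam i ≠ 0}, f i • g (i : ι) := by
            refine Finset.sum_congr rfl fun i _ => ?_
            simp [hnu, i.2]
          rw [← h1, h2, h3, hfsum]
        -- the positive-entry finset
        set T : Finset ι := Finset.univ.filter (fun i => 0 < nu i) with hT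
        have hTne : T.Nonempty := by
          refine ⟨i₀, ?_⟩
          have : nu (i₀ : ι) = f i₀ := by simp [hnu, i₀.2]
          simp [hT, this, hfi₀]
        obtain ⟨i₁, hi₁T, hri₁⟩ := Finset.exists_mem_eq_inf' hTne (fun i => lam i / nu i)
        set r : ℝ := T.inf' hTne (fun i => lam i / nu i) with hr
        have hnui₁ : 0 < nu i₁ := by
          simpa [hT] using hi₁T
        have hr0 : 0 ≤ r := by
          rw [hri₁]
          exact div_nonneg (h0 i₁) hnui₁.le
        set lam' : ι → ℝ := fun i => lam i - r * nu i with hlam'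
        have hlam'0 : ∀ i, 0 ≤ lam' i := by
          intro i
          by_cases hi : 0 < nu i
          · have hle : r ≤ lam i / nu i := Finset.inf'_le _ (by simp [hT, hi])
            have := (le_div_iff₀ hi).mp hle
            simp only [hlam']
            linarith
          · push_neg at hi
            have : r * nu i ≤ 0 := mul_nonpos_of_nonneg_of_nonpos hr0 hi
            simp only [hlam']
            nlinarith [h0 i]
        have hlam'i₁ : lam' i₁ = 0 := by
          simp only [hlam', hri₁]
          field_simp
          ring
        have hsum' : ∑ i, lam' i • g i = ∑ i, lam i • g i := by
          simp only [hlam', sub_smul, mul_smul, Finset.sum_sub_distrib]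
          rw [← Finset.smul_sum, hnusum, smul_zero, sub_zero]
        have hsubset : (Finset.univ.filter fun i => lam' i ≠ 0)
            ⊆ (Finset.univ.filter fun i => lam i ≠ 0).erase i₁ := by
          intro i hi
          simp only [Finset.mem_filter, Finset.mem_univ, true_and] at hi
          refine Finset.mem_erase.mpr ⟨?_, ?_⟩
          · rintro rfl; exact hi hlam'i₁
          · simp only [Finset.mem_filter, Finset.mem_univ, true_and]
            intro h
            refine hi ?_
            have : nu i = 0 := by
              by_contra hn
              exact hnusupp i hn h
            simp [hlam', h, this]
        have hi₁mem : i₁ ∈ Finset.univ.filter fun i => lam i ≠ 0 := by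
          simp only [Finset.mem_filter, Finset.mem_univ, true_and]
          exact hnusupp i₁ hnui₁.ne'
        have hcard' : (Finset.univ.filter fun i => lam' i ≠ 0).card ≤ N := by
          have h1 := Finset.card_le_card hsubset
          have h2 : ((Finset.univ.filter fun i => lam i ≠ 0).erase i₁).card
              = (Finset.univ.filter fun i => lam i ≠ 0).card - 1 :=
            Finset.card_erase_of_mem hi₁mem
          have h3 : 1 ≤ (Finset.univ.filter fun i => lam i ≠ 0).card :=
            Finset.card_pos.mpr ⟨i₁, hi₁mem⟩
          omega
        obtain ⟨mu, hmu0, hmusum, hmuli⟩ := ih lam' hcard' hlam'0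
        exact ⟨mu, hmu0, hmusum.trans hsum', hmuli⟩

/-- A finitely generated cone is closed. -/
lemma isClosed_fg_cone (g : ι → F) :
    IsClosed {x : F | ∃ l : ι → ℝ, (∀ i, 0 ≤ l i) ∧ ∑ i, l i • g i = x} := by
  classical
  have key : {x : F | ∃ l : ι → ℝ, (∀ i, 0 ≤ l i) ∧ ∑ i, l i • g i = x}
      = ⋃ (S : Finset ι), ⋃ (_ : LinearIndependent ℝ fun i : S => g (i : ι)),
        (fun mu : S → ℝ => ∑ i, mu i • g (i : ι)) '' {mu | ∀ i, 0 ≤ mu i} := by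
    ext x
    constructor
    · rintro ⟨l, hl0, hlsum⟩
      obtain ⟨mu, hmu0, hmusum, hmuli⟩ :=
        conic_caratheodory g (Finset.univ.filter fun i => l i ≠ 0).card l le_rfl hl0
      set S : Finset ι := Finset.univ.filter fun i => mu i ≠ 0 with hS
      have hmem : ∀ i : S, mu (i : ι) ≠ 0 := fun i => (Finset.mem_filter.mp i.2).2
      have hequiv : LinearIndependent ℝ fun i : S => g (i : ι) :=
        hmuli.comp (fun i : S => (⟨(i : ι), hmem i⟩ : {i // mu i ≠ 0}))
          (by
            intro i j hij
            have h := congrArg (fun z : {i // mu i ≠ 0} => (z : ι)) hij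
            exact Subtype.coe_injective h)
      refine Set.mem_iUnion.mpr ⟨S, Set.mem_iUnion.mpr ⟨hequiv, ?_⟩⟩
      refine ⟨fun i => mu (i : ι), fun i => hmu0 _, ?_⟩
      show ∑ i : S, mu (i : ι) • g (i : ι) = x
      have h1 : ∑ i : S, mu (i : ι) • g (i : ι) = ∑ i ∈ S, mu i • g i :=
        Finset.sum_coe_sort S (fun i => mu i • g i)
      have h2 : ∑ i ∈ S, mu i • g i = ∑ i, mu i • g i := by
        refine Finset.sum_filter_of_ne ?_
        intro i _ hne
        by_contra h
        exact hne (by simp [h])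
      rw [h1, h2, hmusum, hlsum]
    · intro hx
      obtain ⟨S, hS⟩ := Set.mem_iUnion.mp hx
      obtain ⟨_, hS⟩ := Set.mem_iUnion.mp hS
      obtain ⟨mu, hmu0, hmusum⟩ := hS
      refine ⟨fun i => if h : i ∈ S then mu ⟨i, h⟩ else 0, ?_, ?_⟩
      · intro i
        by_cases h : i ∈ S
        · simp only [dif_pos h]; exact hmu0 _
        · simp [dif_neg h]
      · have h1 : ∑ i ∈ S, (if h : i ∈ S then mu ⟨i, h⟩ else 0) • g i
            = ∑ i, (if h : i ∈ S then mu ⟨i, h⟩ else 0) • g i := by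
          refine Finset.sum_subset (Finset.subset_univ S) ?_
          intro i _ hiS
          simp [dif_neg hiS]
        have h2 : ∑ i ∈ S, (if h : i ∈ S then mu ⟨i, h⟩ else 0) • g i
            = ∑ i : S, mu i • g (i : ι) := by
          rw [← Finset.sum_coe_sort S (fun i => (if h : i ∈ S then mu ⟨i, h⟩ else 0) • g i)]
          refine Finset.sum_congr rfl fun i _ => ?_
          rw [dif_pos i.2]
        rw [← h1, h2]
        simpa using hmusum
  rw [key]
  refine isClosed_iUnion_of_finite fun S => ?_
  rw [Set.iUnion_eq_if]
  split_ifs with hli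
  · -- image of the closed orthant under an injective linear map
    set L : ((i : S) → ℝ) →ₗ[ℝ] F :=
      { toFun := fun mu => ∑ i, mu i • g (i : ι)
        map_add' := by
          intro x y
          simp [add_smul, Finset.sum_add_distrib]
        map_smul' := by
          intro r x
          simp [mul_smul, Finset.smul_sum] } with hL
    have hinj : Function.Injective L := by
      rw [← LinearMap.ker_eq_bot, LinearMap.ker_eq_bot']
      intro mu hmu
      have := Fintype.linearIndependent_iff.mp hli mu hmu
      funext i
      exact this i
    have hemb := LinearMap.isClosedEmbedding_of_injective
      (LinearMap.ker_eq_bot.mpr hinj)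
    have horth : IsClosed {mu : S → ℝ | ∀ i, 0 ≤ mu i} := by
      have : {mu : S → ℝ | ∀ i, 0 ≤ mu i} = ⋂ i, {mu | 0 ≤ mu i} := by
        ext; simp [Set.mem_iInter]
      rw [this]
      exact isClosed_iInter fun i => isClosed_le continuous_const (continuous_apply i)
    exact hemb.isClosedMap _ horth
  · exact isClosed_empty

/-- A finitely generated cone is convex. -/
lemma convex_fg_cone (g : ι → F) :
    Convex ℝ {x : F | ∃ l : ι → ℝ, (∀ i, 0 ≤ l i) ∧ ∑ i, l i • g i = x} := by
  rintro x ⟨lx, hlx0, hlx⟩ y ⟨ly, hly0, hly⟩ s t hs ht _hst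
  refine ⟨fun i => s * lx i + t * ly i,
    fun i => add_nonneg (mul_nonneg hs (hlx0 i)) (mul_nonneg ht (hly0 i)), ?_⟩
  simp only [add_smul, mul_smul, Finset.sum_add_distrib, ← Finset.smul_sum, hlx, hly]

end Cone

section Farkas

variable {F : Type*} [NormedAddCommGroup F] [InnerProductSpace ℝ F] [FiniteDimensional ℝ F]

/-- Affine Farkas lemma: a valid inequality over a nonempty polyhedron is a nonnegative
combination of the constraints (with slack in the constant). -/
lemma farkas {n : ℕ} (A : Fin n → F) (c : Fin n → ℝ) (w : F) (t : ℝ)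
    (hne : ∃ p, ∀ i, c i ≤ ⟪A i, p⟫)
    (hval : ∀ p, (∀ i, c i ≤ ⟪A i, p⟫) → t ≤ ⟪w, p⟫) :
    ∃ l : Fin n → ℝ, (∀ i, 0 ≤ l i) ∧ ∑ i, l i • A i = w ∧ t ≤ ∑ i, l i * c i := by
  classical
  set G := WithLp 2 (F × ℝ) with hGdef
  set e : F × ℝ ≃ G := (WithLp.equiv 2 (F × ℝ)).symm with he
  set gen : Option (Fin n) → G := fun o => o.elim (e (0, -1)) (fun i => e (A i, c i)) with hgen
  set C : Set G := {z | ∃ l : Option (Fin n) → ℝ, (∀ o, 0 ≤ l o) ∧ ∑ o, l o • gen o = z}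
    with hC
  have hgen_mem : ∀ o, gen o ∈ C := by
    intro o
    refine ⟨fun o' => if o' = o then 1 else 0, fun o' => by positivity, ?_⟩
    have : ∀ o', (if o' = o then (1:ℝ) else 0) • gen o' = if o' = o then gen o' else 0 := by
      intro o'; split_ifs <;> simp
    simp_rw [this]
    simp
  have hwmem : e (w, t) ∈ C := by
    by_contra hnot
    obtain ⟨f, u, hfu, hufw⟩ :=
      geometric_hahn_banach_closed_point (convex_fg_cone gen) (isClosed_fg_cone gen) hnot
    have hu0 : 0 < u := by
      have h0C : (0 : G) ∈ C := ⟨0, fun _ => le_rfl, by simp⟩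
      have := hfu 0 h0C
      simpa using this
    have hle : ∀ z ∈ C, f z ≤ 0 := by
      intro z hz
      by_contra hpos
      push_neg at hpos
      obtain ⟨l, hl0, hlsum⟩ := hz
      set s : ℝ := (u + 1) / f z with hs
      have hspos : 0 < s := div_pos (by linarith) hpos
      have hsz : s • z ∈ C := by
        refine ⟨fun o => s * l o, fun o => mul_nonneg hspos.le (hl0 o), ?_⟩
        simp_rw [mul_smul, ← Finset.smul_sum, hlsum]
      have := hfu _ hsz
      rw [map_smul] at this
      simp only [smul_eq_mul, hs] at this
      rw [div_mul_cancel₀ _ hpos.ne'] at this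
      linarith
    set v : G := (InnerProductSpace.toDual ℝ G).symm f with hv
    have hfv : ∀ z : G, f z = ⟪v, z⟫ := fun z =>
      (InnerProductSpace.toDual_symm_apply).symm
    have hinner : ∀ z : G, ⟪v, z⟫ = ⟪v.ofLp.1, z.ofLp.1⟫ + v.ofLp.2 * z.ofLp.2 := by
      intro z
      rw [WithLp.prod_inner_apply]
      simp [mul_comm]
    set vv : F := v.ofLp.1 with hvv
    set r : ℝ := v.ofLp.2 with hrr
    have hr0 : 0 ≤ r := by
      have := hle _ (hgen_mem none)
      rw [hfv, hinner] at this
      have h1 : ((gen none : G)).ofLp.1 = (0 : F) := rfl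
      have h2 : ((gen none : G)).ofLp.2 = (-1 : ℝ) := rfl
      rw [h1, h2] at this
      simp at this
      linarith
    have hAi : ∀ i, ⟪vv, A i⟫ + r * c i ≤ 0 := by
      intro i
      have := hle _ (hgen_mem (some i))
      rw [hfv, hinner] at this
      exact this
    have hwt : 0 < ⟪vv, w⟫ + r * t := by
      have := hufw
      rw [hfv, hinner] at this
      have h1 : ((e (w, t) : G)).ofLp.1 = w := rfl
      have h2 : ((e (w, t) : G)).ofLp.2 = t := rfl
      rw [h1, h2] at this
      linarith
    rcases eq_or_lt_of_le hr0 with hr | hr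
    · -- r = 0
      have hvA : ∀ i, ⟪vv, A i⟫ ≤ 0 := by
        intro i; have := hAi i; rw [← hr] at this; linarith
      have hvw : 0 < ⟪vv, w⟫ := by
        have := hwt; rw [← hr] at this; linarith
      obtain ⟨p₀, hp₀⟩ := hne
      set s : ℝ := max 0 ((⟪w, p₀⟫ - t + 1) / ⟪vv, w⟫) with hs
      have hs0 : 0 ≤ s := le_max_left _ _
      have hfeas : ∀ i, c i ≤ ⟪A i, p₀ - s • vv⟫ := by
        intro i
        rw [inner_sub_right, real_inner_smul_right]
        have h1 : ⟪A i, vv⟫ = ⟪vv, A i⟫ := real_inner_comm _ _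
        nlinarith [hp₀ i, hvA i, mul_nonneg hs0 (neg_nonneg.mpr (hvA i))]
      have := hval _ hfeas
      rw [inner_sub_right, real_inner_smul_right] at this
      have h1 : ⟪w, vv⟫ = ⟪vv, w⟫ := real_inner_comm _ _
      have h2 : (⟪w, p₀⟫ - t + 1) / ⟪vv, w⟫ ≤ s := le_max_right _ _
      have h3 : ⟪w, p₀⟫ - t + 1 ≤ s * ⟪vv, w⟫ := (div_le_iff₀ hvw).mp h2
      rw [h1] at this
      linarith
    · -- r > 0
      set p : F := (-(r⁻¹)) • vv with hp
      have hfeas : ∀ i, c i ≤ ⟪A i, p⟫ := by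
        intro i
        rw [hp, real_inner_smul_right]
        have h1 : ⟪A i, vv⟫ = ⟪vv, A i⟫ := real_inner_comm _ _
        rw [h1]
        have h2 := hAi i
        have h3 : r⁻¹ * (⟪vv, A i⟫ + r * c i) ≤ 0 :=
          mul_nonpos_of_nonneg_of_nonpos (inv_nonneg.mpr hr.le) h2
        have hexp : r⁻¹ * (⟪vv, A i⟫ + r * c i) = r⁻¹ * ⟪vv, A i⟫ + c i := by
          field_simp
        rw [hexp] at h3
        linarith
      have := hval _ hfeas
      rw [hp, real_inner_smul_right] at this
      have h1 : ⟪w, vv⟫ = ⟪vv, w⟫ := real_inner_comm _ _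
      rw [h1] at this
      have h6 : r * t ≤ r * (-r⁻¹ * ⟪vv, w⟫) := mul_le_mul_of_nonneg_left this hr.le
      have h7 : r * (-r⁻¹ * ⟪vv, w⟫) = -⟪vv, w⟫ := by field_simp
      linarith
  obtain ⟨l, hl0, hlsum⟩ := hwmem
  refine ⟨fun i => l (some i), fun i => hl0 _, ?_, ?_⟩
  · have h1 := congrArg (fun z : G => z.ofLp.1) hlsum
    beta_reduce at h1
    rw [WithLp.ofLp_sum, Prod.fst_sum] at h1
    have h2 : ∀ o, ((l o • gen o : G)).ofLp.1 = l o • (gen o).ofLp.1 := fun o => rfl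
    simp_rw [h2] at h1
    rw [Fintype.sum_option] at h1
    have h3 : ((gen none : G)).ofLp.1 = (0 : F) := rfl
    have h4 : ∀ i, ((gen (some i) : G)).ofLp.1 = A i := fun i => rfl
    rw [h3] at h1
    simp_rw [h4] at h1
    have h5 : ((e (w, t) : G)).ofLp.1 = w := rfl
    rw [h5] at h1
    rw [smul_zero, zero_add] at h1
    exact h1
  · have h1 := congrArg (fun z : G => z.ofLp.2) hlsum
    beta_reduce at h1
    rw [WithLp.ofLp_sum, Prod.snd_sum] at h1
    have h2 : ∀ o, ((l o • gen o : G)).ofLp.2 = l o * (gen o).ofLp.2 := fun o => rfl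
    simp_rw [h2] at h1
    rw [Fintype.sum_option] at h1
    have h3 : ((gen none : G)).ofLp.2 = (-1 : ℝ) := rfl
    have h4 : ∀ i, ((gen (some i) : G)).ofLp.2 = c i := fun i => rfl
    rw [h3] at h1
    simp_rw [h4] at h1
    have h5 : ((e (w, t) : G)).ofLp.2 = t := rfl
    rw [h5] at h1
    have := hl0 none
    nlinarith [h1]

end Farkas

noncomputable abbrev E2 := EuclideanSpace ℝ (Fin 2)

section Aux

/-- Motzkin-type certificate when the strict system is infeasible but the weak one is
feasible. -/
lemma motzkin {m : ℕ} (a : Fin m → E2) (c : Fin m → ℝ)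
    (hne : ∃ p, ∀ i, c i ≤ ⟪a i, p⟫)
    (hstrict : ∀ p : E2, ¬ (∀ i, c i < ⟪a i, p⟫)) :
    ∃ lam : Fin m → ℝ, (∀ i, 0 ≤ lam i) ∧ ∑ i, lam i = 1 ∧
      ∑ i, lam i • a i = 0 ∧ 0 ≤ ∑ i, lam i * c i := by
  classical
  set G := WithLp 2 (E2 × ℝ) with hG
  set e : E2 × ℝ ≃ G := (WithLp.equiv 2 (E2 × ℝ)).symm with he
  set A : Fin m → G := fun i => e (a i, -1) with hA
  have hinner : ∀ (z : G) i, ⟪A i, z⟫ = ⟪a i, z.ofLp.1⟫ + (-1) * z.ofLp.2 := by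
    intro z i
    rw [WithLp.prod_inner_apply]
    have h1 : ((A i : G)).ofLp.1 = a i := rfl
    have h2 : ((A i : G)).ofLp.2 = (-1 : ℝ) := rfl
    rw [h1, h2]
    simp [mul_comm]
  obtain ⟨p₀, hp₀⟩ := hne
  have hne' : ∃ q : G, ∀ i, c i ≤ ⟪A i, q⟫ := by
    refine ⟨e (p₀, 0), fun i => ?_⟩
    rw [hinner]
    have h1 : ((e (p₀, 0) : G)).ofLp.1 = p₀ := rfl
    have h2 : ((e (p₀, 0) : G)).ofLp.2 = (0 : ℝ) := rfl
    rw [h1, h2]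
    simpa using hp₀ i
  have hval : ∀ q : G, (∀ i, c i ≤ ⟪A i, q⟫) → (0:ℝ) ≤ ⟪e ((0 : E2), (-1:ℝ)), q⟫ := by
    intro q hq
    have hq' : ∀ i, c i ≤ ⟪a i, q.ofLp.1⟫ - q.ofLp.2 := by
      intro i; have := hq i; rw [hinner] at this; linarith
    have hq2 : q.ofLp.2 ≤ 0 := by
      by_contra h
      push_neg at h
      exact hstrict q.ofLp.1 (fun i => lt_of_le_of_lt (hq' i) (by linarith))
    rw [WithLp.prod_inner_apply]
    have h1 : ((e ((0:E2), (-1:ℝ)) : G)).ofLp.1 = (0 : E2) := rfl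
    have h2 : ((e ((0:E2), (-1:ℝ)) : G)).ofLp.2 = (-1 : ℝ) := rfl
    rw [h1, h2]
    simpa using hq2
  obtain ⟨l, hl0, hlsum, hlc⟩ := farkas A c (e ((0:E2), (-1:ℝ))) 0 hne' hval
  refine ⟨l, hl0, ?_, ?_, by simpa using hlc⟩
  · have h1 := congrArg (fun z : G => z.ofLp.2) hlsum
    beta_reduce at h1
    rw [WithLp.ofLp_sum, Prod.snd_sum] at h1
    have h2 : ∀ i, ((l i • A i : G)).ofLp.2 = l i * (-1) := fun i => rfl
    simp_rw [h2] at h1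
    have h3 : ((e ((0:E2), (-1:ℝ)) : G)).ofLp.2 = (-1:ℝ) := rfl
    rw [h3] at h1
    have : -(∑ i, l i) = -1 := by
      rw [← h1]
      simp [Finset.sum_neg_distrib]
    linarith [this]
  · have h1 := congrArg (fun z : G => z.ofLp.1) hlsum
    beta_reduce at h1
    rw [WithLp.ofLp_sum, Prod.fst_sum] at h1
    have h2 : ∀ i, ((l i • A i : G)).ofLp.1 = l i • a i := fun i => rfl
    simp_rw [h2] at h1
    have h3 : ((e ((0:E2), (-1:ℝ)) : G)).ofLp.1 = (0 : E2) := rfl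
    rw [h3] at h1
    exact h1

lemma inner_isLinearMap (v : E2) : IsLinearMap ℝ (fun p : E2 => ⟪v, p⟫) :=
  ⟨fun x y => inner_add_right v x y, fun r x => real_inner_smul_right v x r⟩

lemma strict_open {m : ℕ} (a : Fin m → E2) (c : Fin m → ℝ) :
    IsOpen {p : E2 | ∀ i, c i < ⟪a i, p⟫} := by
  have : {p : E2 | ∀ i, c i < ⟪a i, p⟫} = ⋂ i, {p | c i < ⟪a i, p⟫} := by
    ext; simp [Set.mem_iInter]
  rw [this]
  exact isOpen_iInter_of_finite fun i =>
    isOpen_lt continuous_const (Continuous.inner continuous_const continuous_id)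

lemma strict_convex' {m : ℕ} (a : Fin m → E2) (c : Fin m → ℝ) :
    Convex ℝ {p : E2 | ∀ i, c i < ⟪a i, p⟫} := by
  have : {p : E2 | ∀ i, c i < ⟪a i, p⟫} = ⋂ i, {p | c i < ⟪a i, p⟫} := by
    ext; simp [Set.mem_iInter]
  rw [this]
  exact convex_iInter fun i => convex_halfSpace_gt (inner_isLinearMap (a i)) (c i)

lemma weak_subset_closure_strict {m : ℕ} (a : Fin m → E2) (c : Fin m → ℝ)
    {y : E2} (hy : ∀ i, c i < ⟪a i, y⟫) {x : E2} (hx : ∀ i, c i ≤ ⟪a i, x⟫) :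
    x ∈ closure {p : E2 | ∀ i, c i < ⟪a i, p⟫} := by
  have htend : Filter.Tendsto (fun n : ℕ => x + ((n:ℝ)+1)⁻¹ • (y - x))
      Filter.atTop (nhds x) := by
    have h1 : Filter.Tendsto (fun n : ℕ => ((n:ℝ)+1)⁻¹) Filter.atTop (nhds 0) := by
      have := tendsto_one_div_add_atTop_nhds_zero_nat (𝕜 := ℝ)
      simpa [one_div] using this
    have h2 := (h1.smul_const (y - x)).const_add x
    simpa using h2
  refine mem_closure_of_tendsto htend (Filter.Eventually.of_forall fun n => ?_)
  intro i
  have hθpos : (0:ℝ) < ((n:ℝ)+1)⁻¹ := by positivity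
  have hθle : ((n:ℝ)+1)⁻¹ ≤ 1 := by
    rw [inv_le_one_iff₀]
    right
    have : (0:ℝ) ≤ (n:ℝ) := Nat.cast_nonneg n
    linarith
  rw [inner_add_right, real_inner_smul_right, inner_sub_right]
  nlinarith [hx i, hy i, mul_pos hθpos (sub_pos.mpr (hy i)),
    mul_nonneg (sub_nonneg.mpr hθle) (sub_nonneg.mpr (hx i))]

end Aux

/-- Converse Farkas separation for bounded polyhedra: if two nonempty compact polyhedra
have disjoint interiors, a Farkas certificate with multipliers summing to 1 exists. -/
theorem stmt_13 (m k : ℕ) (a : Fin m → E2) (b : Fin k → E2) (c : Fin m → ℝ) (d : Fin k → ℝ)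
    (hPne : {p : E2 | ∀ i, c i ≤ ⟪a i, p⟫}.Nonempty)
    (hQne : {p : E2 | ∀ j, d j ≤ ⟪b j, p⟫}.Nonempty)
    (hPcpt : IsCompact {p : E2 | ∀ i, c i ≤ ⟪a i, p⟫})
    (hQcpt : IsCompact {p : E2 | ∀ j, d j ≤ ⟪b j, p⟫})
    (hdisj : Disjoint {p : E2 | ∀ i, c i < ⟪a i, p⟫} {p : E2 | ∀ j, d j < ⟪b j, p⟫}) :
    ∃ (lam : Fin m → ℝ) (mu : Fin k → ℝ),
      (∀ i, 0 ≤ lam i) ∧ (∀ j, 0 ≤ mu j) ∧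
      (∑ i, lam i) + (∑ j, mu j) = 1 ∧
      ∑ i, lam i • a i + ∑ j, mu j • b j = 0 ∧
      0 ≤ ∑ i, lam i * c i + ∑ j, mu j * d j := by
  classical
  by_cases hPs : ∀ p : E2, ¬ (∀ i, c i < ⟪a i, p⟫)
  · obtain ⟨lam, h0, h1, h2, h3⟩ := motzkin a c hPne hPs
    exact ⟨lam, 0, h0, fun j => le_rfl, by simpa using h1, by simpa using h2,
      by simpa using h3⟩
  by_cases hQs : ∀ p : E2, ¬ (∀ j, d j < ⟪b j, p⟫)
  · obtain ⟨mu, h0, h1, h2, h3⟩ := motzkin b d hQne hQs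
    exact ⟨0, mu, fun i => le_rfl, h0, by simpa using h1, by simpa using h2,
      by simpa using h3⟩
  push_neg at hPs hQs
  obtain ⟨yP, hyP⟩ := hPs
  obtain ⟨yQ, hyQ⟩ := hQs
  obtain ⟨f, u, hfP, hfQ⟩ := geometric_hahn_banach_open (strict_convex' a c)
    (strict_open a c) (strict_convex' b d) hdisj
  -- extend inequalities to the weak polyhedra by closure
  have hPle : ∀ p : E2, (∀ i, c i ≤ ⟪a i, p⟫) → f p ≤ u := by
    intro p hp
    have hcl : p ∈ closure {q : E2 | ∀ i, c i < ⟪a i, q⟫} :=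
      weak_subset_closure_strict a c hyP hp
    have hsub : closure {q : E2 | ∀ i, c i < ⟪a i, q⟫} ⊆ {q : E2 | f q ≤ u} := by
      refine closure_minimal ?_ (isClosed_le f.continuous continuous_const)
      intro q hq
      exact (hfP q hq).le
    exact hsub hcl
  have hQge : ∀ p : E2, (∀ j, d j ≤ ⟪b j, p⟫) → u ≤ f p := by
    intro p hp
    have hcl : p ∈ closure {q : E2 | ∀ j, d j < ⟪b j, q⟫} :=
      weak_subset_closure_strict b d hyQ hp
    have hsub : closure {q : E2 | ∀ j, d j < ⟪b j, q⟫} ⊆ {q : E2 | u ≤ f q} := by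
      refine closure_minimal ?_ (isClosed_le continuous_const f.continuous)
      intro q hq
      exact hfQ q hq
    exact hsub hcl
  set v : E2 := (InnerProductSpace.toDual ℝ E2).symm f with hv
  have hfv : ∀ p : E2, f p = ⟪v, p⟫ := fun p =>
    (InnerProductSpace.toDual_symm_apply).symm
  obtain ⟨lam, hlam0, hlamsum, hlamc⟩ := farkas a c (-v) (-u) hPne (by
    intro p hp
    rw [inner_neg_left]
    have := hPle p hp
    rw [hfv] at this
    linarith)
  obtain ⟨mu, hmu0, hmusum, hmud⟩ := farkas b d v u hQne (by
    intro p hp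
    have := hQge p hp
    rw [hfv] at this
    linarith)
  set s : ℝ := (∑ i, lam i) + (∑ j, mu j) with hs
  have hs0 : 0 ≤ s :=
    add_nonneg (Finset.sum_nonneg fun i _ => hlam0 i) (Finset.sum_nonneg fun j _ => hmu0 j)
  have hsne : s ≠ 0 := by
    intro hzero
    have hl : ∑ i, lam i = 0 := by
      have h1 : 0 ≤ ∑ i, lam i := Finset.sum_nonneg fun i _ => hlam0 i
      have h2 : 0 ≤ ∑ j, mu j := Finset.sum_nonneg fun j _ => hmu0 j
      linarith [hzero]
    have hm : ∑ j, mu j = 0 := by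
      have h1 : 0 ≤ ∑ i, lam i := Finset.sum_nonneg fun i _ => hlam0 i
      have h2 : 0 ≤ ∑ j, mu j := Finset.sum_nonneg fun j _ => hmu0 j
      linarith [hzero]
    have hmz : ∀ j, mu j = 0 := by
      intro j
      have := (Finset.sum_eq_zero_iff_of_nonneg (fun j _ => hmu0 j)).mp hm j (Finset.mem_univ j)
      exact this
    have hvz : v = 0 := by
      rw [← hmusum]
      refine Finset.sum_eq_zero fun j _ => ?_
      rw [hmz j, zero_smul]
    have h1 : f yP < u := hfP yP hyP
    have h2 : u ≤ f yQ := hfQ yQ hyQ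
    rw [hfv, hvz] at h1 h2
    simp at h1 h2
    linarith
  have hspos : 0 < s := lt_of_le_of_ne hs0 (Ne.symm hsne)
  refine ⟨fun i => lam i / s, fun j => mu j / s,
    fun i => div_nonneg (hlam0 i) hs0,
    fun j => div_nonneg (hmu0 j) hs0, ?_, ?_, ?_⟩
  · rw [← Finset.sum_div, ← Finset.sum_div, ← add_div, ← hs]
    exact div_self hsne
  · have : ∀ (q : ℕ) , True := fun _ => trivial
    simp_rw [div_eq_inv_mul, mul_smul, ← Finset.smul_sum]
    rw [← smul_add, hlamsum, hmusum]
    simp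
  · simp_rw [div_eq_inv_mul, mul_assoc, ← Finset.mul_sum]
    rw [← mul_add]
    have : 0 ≤ (∑ i, lam i * c i) + ∑ j, mu j * d j := by linarith
    exact mul_nonneg (inv_nonneg.mpr hs0) this
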